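/- Let K be a field, A ∈ K^{n×n} invertible, B ∈ K^{n×m}, C ∈ K^{p×n}, D ∈ K^{p×m}; set G := D + C A^{−1} B ∈ K^{p×m} and P := [[A, B], [−C, D]] ∈ K^{(n+p)×(n+m)}. Then for all y ∈ K^n and x ∈ K^p: (y;x)^T · P = 0 if and only if y^T = x^T C A^{−1} and x^T G = 0. Moreover, the linear map x ↦ ((A^{−1})^T C^T x ; x) is a linear isomorphism from the left null space {x ∈ K^p : x^T G = 0} onto the left null space {z ∈ K^{n+p} : z^T P = 0}; in particular, x_1, …, x_q is a basis of the former if and only if ((A^{−1})^T C^T x_1 ; x_1), …, ((A^{−1})^T C^T x_q ; x_q) is a basis of the latter. -/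
import Mathlib


open Matrix

/-- Left null-space version: `(y;x)ᵀ P = 0` iff `yᵀ = xᵀ C A⁻¹` and
`xᵀ G = 0`, and the map `x ↦ ((A⁻¹)ᵀ Cᵀ x ; x)` is a linear isomorphism between the left
null spaces of `G = D + C A⁻¹ B` and of `P = [[A, B], [-C, D]]`, with bases corresponding. -/
theorem leftKernel_equiv_systemMatrix_transferFunction
    {K : Type*} [Field K] {n m p : ℕ}
    (A : Matrix (Fin n) (Fin n) K) (B : Matrix (Fin n) (Fin m) K)
    (C : Matrix (Fin p) (Fin n) K) (D : Matrix (Fin p) (Fin m) K)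
    (hA : IsUnit A.det)
    (G : Matrix (Fin p) (Fin m) K) (hG : G = D + C * A⁻¹ * B)
    (P : Matrix (Fin n ⊕ Fin p) (Fin n ⊕ Fin m) K)
    (hP : P = Matrix.fromBlocks A B (-C) D) :
    (∀ (y : Fin n → K) (x : Fin p → K),
      Sum.elim y x ᵥ* P = 0 ↔ (y = x ᵥ* (C * A⁻¹) ∧ x ᵥ* G = 0)) ∧
    (∃ e : LinearMap.ker G.vecMulLinear ≃ₗ[K] LinearMap.ker P.vecMulLinear,
      ∀ x : LinearMap.ker G.vecMulLinear,
        (e x : Fin n ⊕ Fin p → K)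
          = Sum.elim (((A⁻¹)ᵀ * Cᵀ) *ᵥ (x : Fin p → K)) (x : Fin p → K)) ∧
    (∀ (q : ℕ) (u : Fin q → (Fin p → K)),
      (LinearIndependent K u ∧
          Submodule.span K (Set.range u) = LinearMap.ker G.vecMulLinear) ↔
      (LinearIndependent K (fun i => Sum.elim (((A⁻¹)ᵀ * Cᵀ) *ᵥ u i) (u i)) ∧
          Submodule.span K (Set.range (fun i => Sum.elim (((A⁻¹)ᵀ * Cᵀ) *ᵥ u i) (u i)))
            = LinearMap.ker P.vecMulLinear)) := by
  have hfun : ∀ x : Fin p → K, ((A⁻¹)ᵀ * Cᵀ) *ᵥ x = x ᵥ* (C * A⁻¹) := by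
    intro x
    rw [← Matrix.transpose_mul, Matrix.mulVec_transpose]
  have hzero : ∀ (a : Fin n → K) (b : Fin m → K),
      Sum.elim a b = (0 : Fin n ⊕ Fin m → K) ↔ a = 0 ∧ b = 0 := by
    intro a b
    constructor
    · intro h
      exact ⟨funext fun i => congrFun h (Sum.inl i),
             funext fun i => congrFun h (Sum.inr i)⟩
    · rintro ⟨rfl, rfl⟩
      funext i
      cases i <;> rfl
  have hAA : A * A⁻¹ = 1 := Matrix.mul_nonsing_inv A hA
  -- key pointwise statement
  have hkey : ∀ (y : Fin n → K) (x : Fin p → K),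
      Sum.elim y x ᵥ* P = 0 ↔ (y = x ᵥ* (C * A⁻¹) ∧ x ᵥ* G = 0) := by
    intro y x
    rw [hP, Matrix.vecMul_fromBlocks]
    simp only [Sum.elim_comp_inl, Sum.elim_comp_inr]
    rw [hzero]
    constructor
    · rintro ⟨h1, h2⟩
      have hYA : y ᵥ* A = x ᵥ* C := by
        rwa [Matrix.vecMul_neg, add_neg_eq_zero] at h1
      have hy : y = x ᵥ* (C * A⁻¹) := by
        have h3 := congrArg (fun v => v ᵥ* A⁻¹) hYA
        simpa [Matrix.vecMul_vecMul, hAA] using h3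
      refine ⟨hy, ?_⟩
      rw [hG]
      have : x ᵥ* (D + C * A⁻¹ * B) = x ᵥ* D + (x ᵥ* (C * A⁻¹)) ᵥ* B := by
        rw [Matrix.vecMul_add, Matrix.vecMul_vecMul]
      rw [this, ← hy]
      rw [add_comm] at h2
      exact h2
    · rintro ⟨hy, hxG⟩
      constructor
      · rw [hy, Matrix.vecMul_neg, Matrix.vecMul_vecMul, Matrix.mul_assoc,
          Matrix.nonsing_inv_mul A hA, Matrix.mul_one, add_neg_cancel]
      · rw [hG, Matrix.vecMul_add] at hxG
        rw [hy, Matrix.vecMul_vecMul, add_comm]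
        exact hxG
  refine ⟨hkey, ?_⟩
  -- the linear map
  set f : (Fin p → K) →ₗ[K] (Fin n ⊕ Fin p → K) :=
    { toFun := fun x => Sum.elim (x ᵥ* (C * A⁻¹)) x
      map_add' := by
        intro a b
        funext i
        cases i <;> simp [Matrix.add_vecMul]
      map_smul' := by
        intro c a
        funext i
        cases i <;> simp [Matrix.smul_vecMul] } with hf_def
  have hf_apply : ∀ x, f x = Sum.elim (x ᵥ* (C * A⁻¹)) x := fun _ => rfl
  have hf_inj : Function.Injective f := by
    intro a b h
    funext i
    exact congrFun h (Sum.inr i)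
  have himg : Submodule.map f (LinearMap.ker G.vecMulLinear)
      = LinearMap.ker P.vecMulLinear := by
    ext z
    simp only [Submodule.mem_map, LinearMap.mem_ker, Matrix.vecMulLinear_apply]
    constructor
    · rintro ⟨x, hx, rfl⟩
      rw [hf_apply]
      exact (hkey _ x).mpr ⟨rfl, hx⟩
    · intro hz
      have hz' : z = Sum.elim (fun i => z (Sum.inl i)) (fun i => z (Sum.inr i)) := by
        funext i
        cases i <;> rfl
      rw [hz'] at hz
      obtain ⟨h1, h2⟩ := (hkey _ _).mp hz
      refine ⟨fun i => z (Sum.inr i), h2, ?_⟩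
      rw [hf_apply]
      funext i
      cases i with
      | inl i => exact (congrFun h1 i).symm
      | inr i => rfl
  refine ⟨⟨(Submodule.equivMapOfInjective f hf_inj
      (LinearMap.ker G.vecMulLinear)).trans (LinearEquiv.ofEq _ _ himg), ?_⟩, ?_⟩
  · intro x
    show f (x : Fin p → K) = _
    rw [hf_apply, hfun]
  · intro q u
    have hcomp : (fun i => Sum.elim (((A⁻¹)ᵀ * Cᵀ) *ᵥ u i) (u i)) = f ∘ u := by
      funext i
      rw [Function.comp_apply, hf_apply, hfun]
    rw [hcomp]
    have hker : LinearMap.ker f = ⊥ := LinearMap.ker_eq_bot.mpr hf_inj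
    have hspan : Submodule.span K (Set.range (f ∘ u))
        = Submodule.map f (Submodule.span K (Set.range u)) := by
      rw [Submodule.map_span, Set.range_comp]
    constructor
    · rintro ⟨hli, hsp⟩
      refine ⟨(LinearMap.linearIndependent_iff f hker).mpr hli, ?_⟩
      rw [hspan, hsp, himg]
    · rintro ⟨hli, hsp⟩
      refine ⟨(LinearMap.linearIndependent_iff f hker).mp hli, ?_⟩
      rw [hspan, ← himg] at hsp
      exact Submodule.map_injective_of_injective hf_inj hsp
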